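/- Let f : ℝ^n × ℝ^m → ℝ be differentiable, μ-strongly convex–strongly concave with saddle point z* = (x*, y*), and suppose the operator F(z) = (∇_x f(x,y); −∇_y f(x,y)) is L-Lipschitz. Then for every z = (x, y), the merit function m(z) := (1/2)‖F(z)‖² satisfies (μ/L²)·m(z) ≤ max_{y'} f(x, y') − min_{x'} f(x', y). -/

import Mathlib

open RealInnerProductSpace

section Aux
variable {E : Type*} [NormedAddCommGroup E] [InnerProductSpace ℝ E] [CompleteSpace E]

lemma convex_support_line {h : E → ℝ} {a b : E} {d : ℝ}
    (hc : ConvexOn ℝ Set.univ h)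
    (hder : HasDerivAt (fun t : ℝ => h (a + t • (b - a))) d 0) :
    h a + d ≤ h b := by
  have hline : ∀ t : ℝ, AffineMap.lineMap a b t = a + t • (b - a) := by
    intro t
    rw [AffineMap.lineMap_apply_module]
    module
  have hφ : ConvexOn ℝ Set.univ (h ∘ (AffineMap.lineMap a b : ℝ →ᵃ[ℝ] E)) := by
    have := hc.comp_affineMap ((AffineMap.lineMap a b : ℝ →ᵃ[ℝ] E))
    simpa using this
  have hder' : HasDerivAt (h ∘ (AffineMap.lineMap a b : ℝ →ᵃ[ℝ] E)) d 0 := by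
    apply HasDerivAt.congr_of_eventuallyEq hder
    filter_upwards with t
    simp [Function.comp, hline t]
  have hslope := hφ.le_slope_of_hasDerivAt (Set.mem_univ (0:ℝ)) (Set.mem_univ (1:ℝ))
    (by norm_num) hder'
  have h0 : (h ∘ (AffineMap.lineMap a b : ℝ →ᵃ[ℝ] E)) 0 = h a := by simp
  have h1 : (h ∘ (AffineMap.lineMap a b : ℝ →ᵃ[ℝ] E)) 1 = h b := by simp
  rw [slope_def_field, h0, h1] at hslope
  simp at hslope
  linarith

lemma strong_convex_support {g : E → ℝ} {μ : ℝ} {a b g' : E}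
    (hc : StrongConvexOn Set.univ μ g)
    (hg : HasGradientAt g g' a) :
    g a + ⟪g', b - a⟫ + μ / 2 * ‖b - a‖ ^ 2 ≤ g b := by
  set h : E → ℝ := fun x => g x - μ / 2 * ‖x‖ ^ 2 with hh
  have hconv : ConvexOn ℝ Set.univ h := strongConvexOn_iff_convex.mp hc
  set l : ℝ → E := fun t => a + t • (b - a) with hl
  have hline : HasDerivAt l (b - a) 0 := by
    have : HasDerivAt (fun t : ℝ => t • (b - a)) ((1:ℝ) • (b - a)) 0 :=
      (hasDerivAt_id (0:ℝ)).smul_const (b - a)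
    have := this.const_add a
    rw [one_smul] at this
    exact this
  have hl0 : l 0 = a := by simp [hl]
  have hg1 : HasDerivAt (fun t : ℝ => g (l t)) (⟪g', b - a⟫) 0 := by
    have hfd : HasFDerivAt g (InnerProductSpace.toDual ℝ E g') (l 0) := by
      rw [hl0]; exact hasGradientAt_iff_hasFDerivAt.mp hg
    simpa [InnerProductSpace.toDual_apply_apply, Function.comp_def] using hfd.comp_hasDerivAt 0 hline
  have hq : HasDerivAt (fun t : ℝ => ‖l t‖ ^ 2) (2 * ⟪a, b - a⟫) 0 := by
    have h2 : HasDerivAt (fun t : ℝ => ⟪l t, l t⟫) (⟪l 0, b - a⟫ + ⟪b - a, l 0⟫) 0 :=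
      HasDerivAt.inner ℝ hline hline
    have heq : (fun t : ℝ => ⟪l t, l t⟫) = fun t : ℝ => ‖l t‖ ^ 2 := by
      funext t; exact real_inner_self_eq_norm_sq (l t)
    rw [heq, hl0] at h2
    convert h2 using 1
    rw [real_inner_comm (b - a) a]; ring
  have hψ : HasDerivAt (fun t : ℝ => h (l t)) (⟪g', b - a⟫ - μ / 2 * (2 * ⟪a, b - a⟫)) 0 :=
    hg1.sub (hq.const_mul (μ / 2))
  have key := convex_support_line hconv hψ
  have hab : ⟪a, b - a⟫ = ⟪a, b⟫ - ‖a‖ ^ 2 := by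
    rw [inner_sub_right, real_inner_self_eq_norm_sq]
  have hnorm : ‖b - a‖ ^ 2 = ‖b‖ ^ 2 - 2 * ⟪b, a⟫ + ‖a‖ ^ 2 := norm_sub_sq_real b a
  have hcomm : ⟪b, a⟫ = ⟪a, b⟫ := real_inner_comm a b
  simp only [hh] at key
  rw [hab] at key
  rw [hnorm, hcomm]
  linarith

lemma hasGradientAt_neg' {g : E → ℝ} {g' a : E} (h : HasGradientAt g g' a) :
    HasGradientAt (fun z => -g z) (-g') a := by
  rw [hasGradientAt_iff_hasFDerivAt] at h ⊢
  rw [map_neg]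
  exact h.neg

lemma young_ineq {c t μ : ℝ} (hμ : 0 < μ) (hc : 0 ≤ c) (ht : 0 ≤ t) :
    c * t - μ / 2 * t ^ 2 ≤ c ^ 2 / (2 * μ) := by
  rw [le_div_iff₀ (by positivity)]
  nlinarith [sq_nonneg (c - μ * t)]

end Aux

theorem merit_lower_bounds_duality_gap {n m : ℕ} (μ L : ℝ) (hμ : 0 < μ) (hL : 0 < L)
    (f : EuclideanSpace ℝ (Fin n) → EuclideanSpace ℝ (Fin m) → ℝ)
    (hdiff : Differentiable ℝ
      (fun z : EuclideanSpace ℝ (Fin n) × EuclideanSpace ℝ (Fin m) => f z.1 z.2))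
    (hconv : ∀ y, StrongConvexOn Set.univ μ (fun x => f x y))
    (hconc : ∀ x, StrongConvexOn Set.univ μ (fun y => -f x y))
    (xstar : EuclideanSpace ℝ (Fin n)) (ystar : EuclideanSpace ℝ (Fin m))
    (hsaddle : ∀ x y, f xstar y ≤ f xstar ystar ∧ f xstar ystar ≤ f x ystar)
    (hFstar : gradient (fun x => f x ystar) xstar = 0 ∧
              gradient (fun y => f xstar y) ystar = 0)
    (hLip : ∀ x y x' y',
      Real.sqrt (‖gradient (fun x'' => f x'' y) x - gradient (fun x'' => f x'' y') x'‖ ^ 2 +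
                 ‖gradient (fun y'' => f x y'') y - gradient (fun y'' => f x' y'') y'‖ ^ 2)
        ≤ L * Real.sqrt (‖x - x'‖ ^ 2 + ‖y - y'‖ ^ 2)) :
    ∀ x y, (μ / L ^ 2) *
        (1 / 2 * (‖gradient (fun x' => f x' y) x‖ ^ 2 + ‖gradient (fun y' => f x y') y‖ ^ 2))
      ≤ (⨆ y', f x y') - (⨅ x', f x' y) := by
  intro x y
  have d1 : ∀ y₀, Differentiable ℝ (fun x' => f x' y₀) := fun y₀ =>
    hdiff.comp (differentiable_id.prodMk (differentiable_const y₀))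
  have d2 : ∀ x₀, Differentiable ℝ (fun y' => f x₀ y') := fun x₀ =>
    hdiff.comp ((differentiable_const x₀).prodMk differentiable_id)
  set gx := gradient (fun x' => f x' y) x with hgx_def
  set gy := gradient (fun y' => f x y') y with hgy_def
  have hgx : HasGradientAt (fun x' => f x' y) gx x := ((d1 y) x).hasGradientAt
  have hgy : HasGradientAt (fun y' => f x y') gy y := ((d2 x) y).hasGradientAt
  have hgyneg : HasGradientAt (fun y' => -f x y') (-gy) y := hasGradientAt_neg' hgy
  -- strong convexity support inequalities at (x, y)
  have key_x : ∀ x', f x y + ⟪gx, x' - x⟫ + μ / 2 * ‖x' - x‖ ^ 2 ≤ f x' y := fun x' =>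
    strong_convex_support (hconv y) hgx
  have key_y : ∀ y', -f x y + ⟪-gy, y' - y⟫ + μ / 2 * ‖y' - y‖ ^ 2 ≤ -f x y' := fun y' =>
    strong_convex_support (hconc x) hgyneg
  -- boundedness of the range
  have bdd_above : BddAbove (Set.range fun y' => f x y') := by
    refine ⟨f x y + ‖gy‖ ^ 2 / (2 * μ), ?_⟩
    rintro _ ⟨y', rfl⟩
    have h1 := key_y y'
    rw [inner_neg_left] at h1
    have h2 : ⟪gy, y' - y⟫ ≤ ‖gy‖ * ‖y' - y‖ := real_inner_le_norm gy (y' - y)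
    have h3 := young_ineq hμ (norm_nonneg gy) (norm_nonneg (y' - y))
    simp only [le_add_iff_nonneg_right]
    linarith
  have bdd_below : BddBelow (Set.range fun x' => f x' y) := by
    refine ⟨f x y - ‖gx‖ ^ 2 / (2 * μ), ?_⟩
    rintro _ ⟨x', rfl⟩
    have h1 := key_x x'
    have h2 : -(‖gx‖ * ‖x' - x‖) ≤ ⟪gx, x' - x⟫ := by
      have := abs_real_inner_le_norm gx (x' - x)
      have := abs_le.mp this
      linarith [this.1]
    have h3 := young_ineq hμ (norm_nonneg gx) (norm_nonneg (x' - x))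
    simp only []
    linarith
  -- sup and inf bounds
  have hsup : f x ystar ≤ ⨆ y', f x y' := le_ciSup bdd_above ystar
  have hinf : ⨅ x', f x' y ≤ f xstar y := ciInf_le bdd_below xstar
  -- strong convexity at the saddle point
  have hgx_star : HasGradientAt (fun x' => f x' ystar) 0 xstar := by
    have := ((d1 ystar) xstar).hasGradientAt
    rwa [hFstar.1] at this
  have hgy_star : HasGradientAt (fun y' => f xstar y') 0 ystar := by
    have := ((d2 xstar) ystar).hasGradientAt
    rwa [hFstar.2] at this
  have hgy_star_neg : HasGradientAt (fun y' => -f xstar y') (-0) ystar :=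
    hasGradientAt_neg' hgy_star
  have sc1 : f xstar ystar + μ / 2 * ‖x - xstar‖ ^ 2 ≤ f x ystar := by
    have := strong_convex_support (hconv ystar) hgx_star (b := x)
    simpa using this
  have sc2 : -f xstar ystar + μ / 2 * ‖y - ystar‖ ^ 2 ≤ -f xstar y := by
    have := strong_convex_support (hconc xstar) hgy_star_neg (b := y)
    simpa using this
  -- Lipschitz bound
  have hlip := hLip x y xstar ystar
  rw [hFstar.1, hFstar.2, sub_zero, sub_zero] at hlip
  set S := ‖gx‖ ^ 2 + ‖gy‖ ^ 2 with hS_def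
  set T := ‖x - xstar‖ ^ 2 + ‖y - ystar‖ ^ 2 with hT_def
  have hS0 : 0 ≤ S := by positivity
  have hT0 : 0 ≤ T := by positivity
  have hST : S ≤ L ^ 2 * T := by
    calc S = Real.sqrt S ^ 2 := (Real.sq_sqrt hS0).symm
      _ ≤ (L * Real.sqrt T) ^ 2 := by
          apply pow_le_pow_left₀ (Real.sqrt_nonneg _) hlip
      _ = L ^ 2 * T := by rw [mul_pow, Real.sq_sqrt hT0]
  have hfinal : (μ / L ^ 2) * (1 / 2 * S) ≤ μ / 2 * T := by
    have h1 : (μ / L ^ 2) * (1 / 2 * S) ≤ (μ / L ^ 2) * (1 / 2 * (L ^ 2 * T)) :=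
      mul_le_mul_of_nonneg_left
        (mul_le_mul_of_nonneg_left hST (by norm_num : (0:ℝ) ≤ 1 / 2))
        (by positivity : (0:ℝ) ≤ μ / L ^ 2)
    have h2 : (μ / L ^ 2) * (1 / 2 * (L ^ 2 * T)) = μ / 2 * T := by
      field_simp
    linarith
  have hgap : μ / 2 * T ≤ (⨆ y', f x y') - (⨅ x', f x' y) := by
    rw [hT_def]
    have := hsup
    have := hinf
    nlinarith [sc1, sc2, hsup, hinf]
  linarith
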